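/- Let V be a real inner product space with almost contact metric structure (φ, ξ, η) and S symmetric with Sξ = αξ + βU, U ⊥ ξ unit, β ≠ 0. If S satisfies the commutator condition T_X^{(k)}(L_ξ Y) = L_ξ(T_X^{(k)} Y) for all X ⊥ ξ and all Y ∈ V (with k ≠ 0), then ⟨SU, φU⟩ = 0 and 2⟨SU, U⟩ + ⟨SφU, φU⟩ = k. -/

import Mathlib

open RealInnerProductSpace

/-- Equations (4.5) and (4.6) of the paper: if the torsion operator
commutes with `L_ξ` for all `X ⊥ ξ`, then `⟪SU, φU⟫ = 0` and
`2⟪SU, U⟫ + ⟪SφU, φU⟫ = k`. -/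
theorem stmt_10 {V : Type*} [NormedAddCommGroup V] [InnerProductSpace ℝ V]
    [FiniteDimensional ℝ V]
    (φ S : V →ₗ[ℝ] V) (ξ U : V) (α β k : ℝ)
    (hφ2 : ∀ X : V, φ (φ X) = -X + ⟪X, ξ⟫ • ξ)
    (hξ : ⟪ξ, ξ⟫ = 1)
    (hmetric : ∀ X Y : V, ⟪φ X, φ Y⟫ = ⟪X, Y⟫ - ⟪X, ξ⟫ * ⟪Y, ξ⟫)
    (hskew : ∀ X Y : V, ⟪φ X, Y⟫ = -⟪X, φ Y⟫)
    (hφξ : φ ξ = 0)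
    (hsym : ∀ X Y : V, ⟪S X, Y⟫ = ⟪X, S Y⟫)
    (hSξ : S ξ = α • ξ + β • U)
    (hUξ : ⟪U, ξ⟫ = 0) (hU : ‖U‖ = 1)
    (hβ : β ≠ 0) (hk : k ≠ 0)
    (hcomm : ∀ X Y : V, ⟪X, ξ⟫ = 0 →
      -- T_X^{(k)} (L_ξ Y) = L_ξ (T_X^{(k)} Y), with
      -- F_X^{(k)} Y = ⟪φSX, Y⟫ ξ - ⟪Y, ξ⟫ φSX - k ⟪X, ξ⟫ φY,
      -- T_X^{(k)} Y = F_X^{(k)} Y - F_Y^{(k)} X, L_ξ = φS - Sφ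
      ((⟪φ (S X), φ (S Y) - S (φ Y)⟫ • ξ
          - ⟪φ (S Y) - S (φ Y), ξ⟫ • φ (S X)
          - (k * ⟪X, ξ⟫) • φ (φ (S Y) - S (φ Y)))
        - (⟪φ (S (φ (S Y) - S (φ Y))), X⟫ • ξ
          - ⟪X, ξ⟫ • φ (S (φ (S Y) - S (φ Y)))
          - (k * ⟪φ (S Y) - S (φ Y), ξ⟫) • φ X))
      = (φ (S ((⟪φ (S X), Y⟫ • ξ - ⟪Y, ξ⟫ • φ (S X) - (k * ⟪X, ξ⟫) • φ Y)
            - (⟪φ (S Y), X⟫ • ξ - ⟪X, ξ⟫ • φ (S Y) - (k * ⟪Y, ξ⟫) • φ X)))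
        - S (φ ((⟪φ (S X), Y⟫ • ξ - ⟪Y, ξ⟫ • φ (S X) - (k * ⟪X, ξ⟫) • φ Y)
            - (⟪φ (S Y), X⟫ • ξ - ⟪X, ξ⟫ • φ (S Y) - (k * ⟪Y, ξ⟫) • φ X))))) :
    ⟪S U, φ U⟫ = 0 ∧ 2 * ⟪S U, U⟫ + ⟪S (φ U), φ U⟫ = k := by

  have hU2 : ⟪U, U⟫ = (1:ℝ) := by
    have := real_inner_self_eq_norm_mul_norm U
    rw [hU] at this; simpa using this
  have hξU : ⟪ξ, U⟫ = 0 := by rw [real_inner_comm]; exact hUξ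
  have hφUξ : ⟪φ U, ξ⟫ = 0 := by rw [hskew, hφξ]; simp
  have hφUU : ⟪φ U, U⟫ = 0 := by
    have h1 := hskew U U
    have h2 : ⟪φ U, U⟫ = ⟪U, φ U⟫ := real_inner_comm _ _
    linarith [h1, h2]
  have key : ∀ X : V, ⟪X, ξ⟫ = 0 →
      2 * ⟪S X, U⟫ + ⟪S (φ U), φ X⟫ = k * ⟪X, U⟫ := by
    intro X hX
    have h := hcomm X ξ hX
    have h2 := congrArg (fun v => (inner ℝ v ξ : ℝ)) h
    simp only [map_add, map_smul, map_sub, map_neg, hφξ, hSξ, hφ2,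
      inner_add_left, inner_sub_left, inner_smul_left, inner_neg_left,
      inner_zero_left, inner_zero_right, hξ, hUξ, hξU, hX, hφUξ,
      smul_zero, zero_smul, mul_zero, zero_mul, mul_one, one_mul, one_smul, map_zero,
      starRingEnd_apply, star_trivial,
      sub_zero, zero_sub, add_zero, zero_add, neg_zero, neg_neg,
      smul_add, smul_sub, smul_neg, LinearMap.map_smulₛₗ,
      RingHom.id_apply] at h2
    -- rewrite remaining inner products involving φ
    simp only [hskew, hmetric, hφξ, hφ2, inner_zero_left, inner_zero_right,
      inner_add_right, inner_sub_right, inner_smul_right, inner_neg_right,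
      hξ, hUξ, hξU, hX, mul_zero, zero_mul, mul_one, sub_zero, zero_sub,
      add_zero, zero_add, neg_zero, neg_neg, starRingEnd_apply, star_trivial,
      map_zero, one_smul, smul_zero, zero_smul, mul_one] at h2
    have s10 : ⟪S (S X), ξ⟫ = α * ⟪S X, ξ⟫ + β * ⟪S X, U⟫ := by
      rw [hsym, hSξ]; simp [inner_add_right, inner_smul_right]
    have s11 : ⟪S X, φ (β • φ U)⟫ = -(β * ⟪S X, U⟫) := by
      rw [map_smul, hφ2, inner_smul_right]
      simp [inner_add_right, inner_smul_right, hUξ]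
    have s12 : ⟪S X, ξ⟫ = β * ⟪X, U⟫ := by
      rw [hsym, hSξ]; simp [inner_add_right, inner_smul_right, hX]
    refine mul_left_cancel₀ hβ ?_
    linear_combination h2 - s10 + s11 + k * s12
  have k1 := key (φ U) hφUξ
  have k2 := key U hUξ
  have e1 : φ (φ U) = -U := by rw [hφ2]; simp [hUξ]
  rw [e1] at k1
  have t1 : ⟪S (φ U), -U⟫ = -⟪S (φ U), U⟫ := by simp
  rw [t1] at k1
  have t2 : ⟪S (φ U), U⟫ = ⟪S U, φ U⟫ := by
    rw [hsym]; exact real_inner_comm _ _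
  constructor
  · rw [← t2]; rw [hφUU] at k1; linarith [k1]
  · rw [hU2] at k2; linarith [k2]
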